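/- arXiv:2403.01287 — 4 statements merged into one kernel-verified Lean document; each statement's English description precedes it below -/
import Mathlib

section
/- Let K be a field of characteristic 0 and let t, d ∈ K. The Weierstrass curve C_{9,1}(t,d) has invariants c₄ = 144·d²·(t+6)·(t³+234t²+756t+2160), c₆ = 1728·d³·(t⁶−504t⁵−16632t⁴−123012t³−517104t²−1143072t−1475496), and discriminant Δ = 2¹²·3⁶·d⁶·(t−3)⁹·(t²+3t+9); moreover, if Δ ≠ 0 then its j-invariant equals (t+6)³·(t³+234t²+756t+2160)³ / ((t−3)⁹·(t²+3t+9)). -/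
noncomputable section

/-- The curve `C_{9,1}(t,d)`. -/
def C91 {K : Type*} [Field K] (t d : K) : WeierstrassCurve K :=
  { a₁ := 0, a₂ := 0, a₃ := 0,
    a₄ := -3 * d ^ 2 * (t + 6) * (t ^ 3 + 234 * t ^ 2 + 756 * t + 2160),
    a₆ := -2 * d ^ 3 * (t ^ 6 - 504 * t ^ 5 - 16632 * t ^ 4 - 123012 * t ^ 3 - 517104 * t ^ 2 - 1143072 * t - 1475496) }

theorem stmt0 {K : Type*} [Field K] [CharZero K] (t d : K) :
    (C91 t d).c₄ = 144 * d ^ 2 * (t + 6) * (t ^ 3 + 234 * t ^ 2 + 756 * t + 2160) ∧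
    (C91 t d).c₆ = 1728 * d ^ 3 * (t ^ 6 - 504 * t ^ 5 - 16632 * t ^ 4 - 123012 * t ^ 3 - 517104 * t ^ 2 - 1143072 * t - 1475496) ∧
    (C91 t d).Δ = 2 ^ 12 * 3 ^ 6 * d ^ 6 * (t - 3) ^ 9 * (t ^ 2 + 3 * t + 9) ∧
    ((C91 t d).Δ ≠ 0 → (C91 t d).c₄ ^ 3 / (C91 t d).Δ =
      (t + 6) ^ 3 * (t ^ 3 + 234 * t ^ 2 + 756 * t + 2160) ^ 3 / ((t - 3) ^ 9 * (t ^ 2 + 3 * t + 9))) := by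
  have hc4 : (C91 t d).c₄ = 144 * d ^ 2 * (t + 6) * (t ^ 3 + 234 * t ^ 2 + 756 * t + 2160) := by
    simp only [C91, WeierstrassCurve.c₄, WeierstrassCurve.b₂, WeierstrassCurve.b₄]
    ring
  have hΔ : (C91 t d).Δ = 2 ^ 12 * 3 ^ 6 * d ^ 6 * (t - 3) ^ 9 * (t ^ 2 + 3 * t + 9) := by
    simp only [C91, WeierstrassCurve.Δ, WeierstrassCurve.b₂, WeierstrassCurve.b₄,
      WeierstrassCurve.b₆, WeierstrassCurve.b₈]
    ring
  refine ⟨hc4, ?_, hΔ, ?_⟩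
  · simp only [C91, WeierstrassCurve.c₆, WeierstrassCurve.b₂, WeierstrassCurve.b₄,
      WeierstrassCurve.b₆]
    ring
  · intro h
    rw [hΔ] at h ⊢
    rw [hc4]
    have hd : d ≠ 0 := fun hd => h (by rw [hd]; ring)
    have h1 : (t - 3) ^ 9 ≠ 0 := fun h1 => h (by rw [h1]; ring)
    have h2 : (t ^ 2 + 3 * t + 9) ≠ 0 := fun h2 => h (by rw [h2]; ring)
    field_simp
    ring
end
end

section
/- Let K be a field of characteristic 0 and let t, d ∈ K. The Weierstrass curve C_{9,3}(t,d) has invariants c₄ = 2⁴·3¹⁰·d²·t·(t³−24), c₆ = 2⁶·3¹⁵·d³·(t⁶−36t³+216), and discriminant Δ = 2¹²·3³⁰·d⁶·(t−3)·(t²+3t+9); moreover, if Δ ≠ 0 then its j-invariant equals t³·(t³−24)³ / ((t−3)·(t²+3t+9)). -/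
noncomputable section

/-- The curve `C_{9,3}(t,d)`. -/
def C93 {K : Type*} [Field K] (t d : K) : WeierstrassCurve K :=
  { a₁ := 0, a₂ := 0, a₃ := 0,
    a₄ := -19683 * d ^ 2 * t * (t ^ 3 - 24),
    a₆ := -1062882 * d ^ 3 * (t ^ 6 - 36 * t ^ 3 + 216) }

theorem stmt1 {K : Type*} [Field K] [CharZero K] (t d : K) :
    (C93 t d).c₄ = 2 ^ 4 * 3 ^ 10 * d ^ 2 * t * (t ^ 3 - 24) ∧
    (C93 t d).c₆ = 2 ^ 6 * 3 ^ 15 * d ^ 3 * (t ^ 6 - 36 * t ^ 3 + 216) ∧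
    (C93 t d).Δ = 2 ^ 12 * 3 ^ 30 * d ^ 6 * (t - 3) * (t ^ 2 + 3 * t + 9) ∧
    ((C93 t d).Δ ≠ 0 → (C93 t d).c₄ ^ 3 / (C93 t d).Δ =
      t ^ 3 * (t ^ 3 - 24) ^ 3 / ((t - 3) * (t ^ 2 + 3 * t + 9))) := by
  have hc4 : (C93 t d).c₄ = 2 ^ 4 * 3 ^ 10 * d ^ 2 * t * (t ^ 3 - 24) := by
    simp [C93, WeierstrassCurve.c₄, WeierstrassCurve.b₂, WeierstrassCurve.b₄]; ring
  have hΔ : (C93 t d).Δ = 2 ^ 12 * 3 ^ 30 * d ^ 6 * (t - 3) * (t ^ 2 + 3 * t + 9) := by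
    simp [C93, WeierstrassCurve.Δ, WeierstrassCurve.b₂, WeierstrassCurve.b₄,
      WeierstrassCurve.b₆, WeierstrassCurve.b₈]; ring
  refine ⟨hc4, ?_, hΔ, ?_⟩
  · simp [C93, WeierstrassCurve.c₆, WeierstrassCurve.b₂, WeierstrassCurve.b₄,
      WeierstrassCurve.b₆]; ring
  · intro hne
    rw [hΔ] at hne ⊢
    have hd : d ≠ 0 := by rintro rfl; simp at hne
    have h1 : (t - 3) * (t ^ 2 + 3 * t + 9) ≠ 0 := by
      intro h; apply hne; rw [mul_assoc]; rw [h]; ring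
    rw [hc4]
    field_simp
end
end

section
/- Let K be a number field, 𝔭 a nonzero prime ideal of its ring of integers, ν_𝔭 the normalized 𝔭-adic additive valuation on K, and let t ∈ K with ν_𝔭(t) = −k for some integer k > 0. Then the rational expressions j₁ = (t+6)³(t³+234t²+756t+2160)³/((t−3)⁹(t²+3t+9)), j₂ = (t+6)³·t³·(t²−6t+36)³/((t−3)³(t²+3t+9)³), and j₃ = t³(t³−24)³/((t−3)(t²+3t+9)) are defined (all factors in the denominators are nonzero) and satisfy ν_𝔭(j₁) = −k, ν_𝔭(j₂) = −3k, and ν_𝔭(j₃) = −9k. -/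
noncomputable section

open IsDedekindDomain NumberField

open scoped Classical in
/-- The normalized `𝔭`-adic additive valuation on `K`, extended by `nu v 0 = 0`. -/
def nu {K : Type*} [Field K] [NumberField K]
    (v : HeightOneSpectrum (𝓞 K)) (x : K) : ℤ :=
  if hx : x = 0 then 0
  else -Multiplicative.toAdd (WithZero.unzero ((v.valuation K).ne_zero_iff.mpr hx))

open Multiplicative

/-- `E n = ofAdd n` as an element of `ℤₘ₀`. -/
def E (n : ℤ) : WithZero (Multiplicative ℤ) := ((ofAdd n : Multiplicative ℤ) : WithZero (Multiplicative ℤ))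

lemma E_lt {a b : ℤ} : E a < E b ↔ a < b := by
  simp [E, WithZero.coe_lt_coe, Multiplicative.ofAdd_lt]

lemma E_mul (a b : ℤ) : E a * E b = E (a + b) := by
  simp [E, ← WithZero.coe_mul, ← ofAdd_add]

lemma E_div (a b : ℤ) : E a / E b = E (a - b) := by
  simp [E, ← WithZero.coe_div, ← ofAdd_sub]

lemma E_pow (m : ℕ) (a : ℤ) : E a ^ m = E (m * a) := by
  simp [E, ← WithZero.coe_pow, ← ofAdd_nsmul, nsmul_eq_mul]

lemma E_ne_zero (a : ℤ) : E a ≠ 0 := WithZero.coe_ne_zero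

lemma E_zero : E 0 = 1 := by simp [E]

lemma nu_val {K : Type*} [Field K] [NumberField K] (v : HeightOneSpectrum (𝓞 K))
    {x : K} (hx : x ≠ 0) : v.valuation K x = E (-(nu v x)) := by
  simp only [nu, dif_neg hx, E, neg_neg, ofAdd_toAdd, WithZero.coe_unzero]

lemma nu_eq_of_val {K : Type*} [Field K] [NumberField K] (v : HeightOneSpectrum (𝓞 K))
    {x : K} (hx : x ≠ 0) {n : ℤ} (h : v.valuation K x = E (-n)) : nu v x = n := by
  have h2 := nu_val v hx
  rw [h] at h2
  have := WithZero.coe_inj.mp h2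
  have := ofAdd.injective this
  omega

lemma val_intCast {K : Type*} [Field K] [NumberField K] (v : HeightOneSpectrum (𝓞 K))
    (c : ℤ) : v.valuation K ((c : K)) ≤ 1 := by
  have := v.valuation_le_one (K := K) (c : 𝓞 K)
  simpa using this

example {K : Type*} [Field K] [NumberField K] (v : HeightOneSpectrum (𝓞 K)) :
    v.valuation K ((234 : K)) ≤ 1 := by
  have := val_intCast v 234; push_cast at this; exact this

theorem stmt8 {K : Type*} [Field K] [NumberField K] (v : HeightOneSpectrum (𝓞 K))
    (t : K) (k : ℤ) (hk : 0 < k) (ht : nu v t = -k) :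
    t - 3 ≠ 0 ∧ (t ^ 2 + 3 * t + 9) ≠ 0 ∧
    nu v ((t + 6) ^ 3 * (t ^ 3 + 234 * t ^ 2 + 756 * t + 2160) ^ 3 / ((t - 3) ^ 9 * (t ^ 2 + 3 * t + 9))) = -k ∧
    nu v ((t + 6) ^ 3 * t ^ 3 * (t ^ 2 - 6 * t + 36) ^ 3 / ((t - 3) ^ 3 * (t ^ 2 + 3 * t + 9) ^ 3)) = -(3 * k) ∧
    nu v (t ^ 3 * (t ^ 3 - 24) ^ 3 / ((t - 3) * (t ^ 2 + 3 * t + 9))) = -(9 * k) := by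
  have ht0 : t ≠ 0 := by
    intro h; rw [h] at ht; simp [nu] at ht; omega
  have hvt : v.valuation K t = E k := by
    have := nu_val v ht0; rw [ht, neg_neg] at this; exact this
  have key : ∀ {x y : K} {a b : ℤ}, v.valuation K x = E b → v.valuation K y ≤ E a → a < b →
      v.valuation K (x + y) = E b := by
    intro x y a b hx hy hab
    rw [Valuation.map_add_eq_of_lt_left, hx]
    rw [hx]; exact lt_of_le_of_lt hy (E_lt.mpr hab)
  have keysub : ∀ {x y : K} {a b : ℤ}, v.valuation K x = E b → v.valuation K y ≤ E a → a < b →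
      v.valuation K (x - y) = E b := by
    intro x y a b hx hy hab
    rw [Valuation.map_sub_eq_of_lt_left, hx]
    rw [hx]; exact lt_of_le_of_lt hy (E_lt.mpr hab)
  have nz : ∀ {x : K} {a : ℤ}, v.valuation K x = E a → x ≠ 0 := by
    intro x a h
    exact (v.valuation K).ne_zero_iff.mp (h ▸ E_ne_zero a)
  have hp2 : v.valuation K (t ^ 2) = E (2 * k) := by
    have : v.valuation K (t ^ 2) = E ((2 : ℕ) * k) := by rw [map_pow, hvt, E_pow]
    push_cast at this; exact this
  have hp3 : v.valuation K (t ^ 3) = E (3 * k) := by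
    have : v.valuation K (t ^ 3) = E ((3 : ℕ) * k) := by rw [map_pow, hvt, E_pow]
    push_cast at this; exact this
  have hC : ∀ c : ℤ, v.valuation K ((c : K)) ≤ E 0 := by
    intro c; rw [E_zero]; exact val_intCast v c
  have hT : ∀ (c : ℤ) (m : ℕ), v.valuation K ((c : K) * t ^ m) ≤ E (m * k) := by
    intro c m
    rw [map_mul, map_pow, hvt, E_pow]
    calc v.valuation K ((c : K)) * E (m * k) ≤ 1 * E (m * k) :=
          mul_le_mul_left (val_intCast v c) _
      _ = E (m * k) := one_mul _
  have c6 : v.valuation K (6 : K) ≤ E 0 := by have := hC 6; push_cast at this; exact this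
  have c3 : v.valuation K (3 : K) ≤ E 0 := by have := hC 3; push_cast at this; exact this
  have c9 : v.valuation K (9 : K) ≤ E 0 := by have := hC 9; push_cast at this; exact this
  have c36 : v.valuation K (36 : K) ≤ E 0 := by have := hC 36; push_cast at this; exact this
  have c24 : v.valuation K (24 : K) ≤ E 0 := by have := hC 24; push_cast at this; exact this
  have c2160 : v.valuation K (2160 : K) ≤ E 0 := by have := hC 2160; push_cast at this; exact this
  have h234 : v.valuation K (234 * t ^ 2 : K) ≤ E (2 * k) := by
    have := hT 234 2; push_cast at this; exact this
  have h756 : v.valuation K (756 * t : K) ≤ E (1 * k) := by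
    have := hT 756 1; push_cast [pow_one] at this; exact this
  have h3t : v.valuation K (3 * t : K) ≤ E (1 * k) := by
    have := hT 3 1; push_cast [pow_one] at this; exact this
  have h6t : v.valuation K (6 * t : K) ≤ E (1 * k) := by
    have := hT 6 1; push_cast [pow_one] at this; exact this
  have hF1 : v.valuation K (t + 6) = E k := key hvt c6 hk
  have hF2 : v.valuation K (t ^ 3 + 234 * t ^ 2 + 756 * t + 2160) = E (3 * k) :=
    key (key (key hp3 h234 (by omega)) h756 (by omega)) c2160 (by omega)
  have hF3 : v.valuation K (t - 3) = E k := keysub hvt c3 hk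
  have hF4 : v.valuation K (t ^ 2 + 3 * t + 9) = E (2 * k) :=
    key (key hp2 h3t (by omega)) c9 (by omega)
  have hF5 : v.valuation K (t ^ 2 - 6 * t + 36) = E (2 * k) :=
    key (keysub hp2 h6t (by omega)) c36 (by omega)
  have hF6 : v.valuation K (t ^ 3 - 24) = E (3 * k) := keysub hp3 c24 (by omega)
  refine ⟨nz hF3, nz hF4, ?_, ?_, ?_⟩
  · have hq : v.valuation K ((t + 6) ^ 3 * (t ^ 3 + 234 * t ^ 2 + 756 * t + 2160) ^ 3 /
        ((t - 3) ^ 9 * (t ^ 2 + 3 * t + 9))) = E k := by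
      simp only [Valuation.map_div, map_mul, map_pow]
      rw [hF1, hF2, hF3, hF4]
      simp only [E_pow, E_mul, E_div]
      congr 1; push_cast; ring
    exact nu_eq_of_val v (nz hq) (by rw [neg_neg]; exact hq)
  · have hq : v.valuation K ((t + 6) ^ 3 * t ^ 3 * (t ^ 2 - 6 * t + 36) ^ 3 /
        ((t - 3) ^ 3 * (t ^ 2 + 3 * t + 9) ^ 3)) = E (3 * k) := by
      simp only [Valuation.map_div, map_mul, map_pow]
      rw [hF1, hF3, hF4, hF5, hvt]
      simp only [E_pow, E_mul, E_div]
      congr 1; push_cast; ring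
    exact nu_eq_of_val v (nz hq) (by rw [neg_neg]; exact hq)
  · have hq : v.valuation K (t ^ 3 * (t ^ 3 - 24) ^ 3 / ((t - 3) * (t ^ 2 + 3 * t + 9))) =
        E (9 * k) := by
      simp only [Valuation.map_div, map_mul, map_pow]
      rw [hF3, hF4, hF6, hvt]
      simp only [E_pow, E_mul, E_div]
      congr 1; push_cast; ring
    exact nu_eq_of_val v (nz hq) (by rw [neg_neg]; exact hq)
end
end

section
/- Let K = ℚ(√3) and t = 3 + 3√3 ∈ K. Then the Weierstrass curves C_{9,1}(t,1) and C_{9,3}(t,1) over K have nonzero discriminants, their discriminants satisfy 3¹²·Δ(C_{9,1}(t,1)) = Δ(C_{9,3}(t,1)), their j-invariants are equal, and yet there is no change of variables (x,y) ↦ (u²x + r, u³y + su²x + w) with u ∈ K^×, r, s, w ∈ K transforming C_{9,1}(t,1) into C_{9,3}(t,1); that is, C_{9,1}(t,1) and C_{9,3}(t,1) are not isomorphic over K. -/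
noncomputable section

lemma no_rat_sqrt3 (q : ℚ) : q ^ 2 ≠ 3 := by
  intro h
  have h3 : Irrational (Real.sqrt 3) := by
    simpa using (Nat.prime_three).irrational_sqrt
  have hq : ((q : ℝ)) ^ 2 = 3 := by exact_mod_cast h
  have : Real.sqrt 3 = ((|q| : ℚ) : ℝ) := by
    rw [← hq, Real.sqrt_sq_eq_abs]
    push_cast
    ring
  rw [this] at h3
  exact (Rat.not_irrational _) h3

lemma lin_indep_sqrt3 {K : Type*} [Field K] [CharZero K] {s : K} (hs : s ^ 2 = 3)
    {a b : ℚ} (h : (a : K) + (b : K) * s = 0) : a = 0 ∧ b = 0 := by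
  by_cases hb : b = 0
  · subst hb
    have ha : (a : K) = 0 := by simpa using h
    exact ⟨by exact_mod_cast ha, rfl⟩
  · exfalso
    have hbK : (b : K) ≠ 0 := by exact_mod_cast hb
    have hsr : s = ((-a / b : ℚ) : K) := by
      push_cast
      field_simp
      linear_combination h
    have h3 : (((-a / b) ^ 2 : ℚ) : K) = ((3 : ℚ) : K) := by
      rw [show (((-a / b) ^ 2 : ℚ) : K) = ((-a / b : ℚ) : K) ^ 2 by push_cast; ring, ← hsr]
      exact_mod_cast hs
    have : ((-a / b) ^ 2 : ℚ) = 3 := by exact_mod_cast h3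
    exact no_rat_sqrt3 _ this

theorem stmt13 {K : Type*} [Field K] [CharZero K] (s : K) (hs : s ^ 2 = 3)
    (hgen : ∀ x : K, ∃ a b : ℚ, x = (a : K) + (b : K) * s) :
    (C91 (3 + 3 * s) 1).Δ ≠ 0 ∧ (C93 (3 + 3 * s) 1).Δ ≠ 0 ∧
    3 ^ 12 * (C91 (3 + 3 * s) 1).Δ = (C93 (3 + 3 * s) 1).Δ ∧
    (C91 (3 + 3 * s) 1).c₄ ^ 3 / (C91 (3 + 3 * s) 1).Δ =
      (C93 (3 + 3 * s) 1).c₄ ^ 3 / (C93 (3 + 3 * s) 1).Δ ∧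
    ¬ ∃ C : WeierstrassCurve.VariableChange K,
        C • (C91 (3 + 3 * s) 1) = C93 (3 + 3 * s) 1 := by
  have hD1 : (C91 (3 + 3 * s) 1).Δ = 385610460475392 + 257073640316928 * s := by
    simp only [C91, WeierstrassCurve.Δ, WeierstrassCurve.b₂, WeierstrassCurve.b₄,
      WeierstrassCurve.b₆, WeierstrassCurve.b₈]
    linear_combination (128536820158464 + 85691213438976*s + 42845606719488*s^2 +
      28563737812992*s^3 + 14281868906496*s^4 + 9521245937664*s^5 + 4760622968832*s^6 +
      3173748645888*s^7 + 1586874322944*s^8 + 528958107648*s^9) * hs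
  have hD3 : (C93 (3 + 3 * s) 1).Δ = 531441 * (385610460475392 + 257073640316928 * s) := by
    simp only [C93, WeierstrassCurve.Δ, WeierstrassCurve.b₂, WeierstrassCurve.b₄,
      WeierstrassCurve.b₆, WeierstrassCurve.b₈]
    linear_combination (68309736241834266624 + 22769912080611422208*s) * hs
  have hc41 : (C91 (3 + 3 * s) 1).c₄ = 25614144 + 14276736 * s := by
    simp only [C91, WeierstrassCurve.c₄, WeierstrassCurve.b₂, WeierstrassCurve.b₄]
    linear_combination (5703696 + 979776*s + 11664*s^2) * hs
  have hc43 : (C93 (3 + 3 * s) 1).c₄ = 81 * (25614144 + 14276736 * s) := by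
    simp only [C93, WeierstrassCurve.c₄, WeierstrassCurve.b₂, WeierstrassCurve.b₄]
    linear_combination (688747536 + 306110016*s + 76527504*s^2) * hs
  have hD1ne : (385610460475392 : K) + 257073640316928 * s ≠ 0 := by
    intro h
    have h' : ((385610460475392 : ℚ) : K) + ((257073640316928 : ℚ) : K) * s = 0 := by
      push_cast; exact h
    have := (lin_indep_sqrt3 hs h').1
    norm_num at this
  have hD3ne : (531441 : K) * (385610460475392 + 257073640316928 * s) ≠ 0 :=
    mul_ne_zero (by norm_num) hD1ne
  refine ⟨by rw [hD1]; exact hD1ne, by rw [hD3]; exact hD3ne,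
    by rw [hD1, hD3]; ring, ?_, ?_⟩
  · rw [hc41, hc43, hD1, hD3, div_eq_div_iff hD1ne hD3ne]
    ring
  · rintro ⟨C, hC⟩
    have h1 : (C • (C91 (3 + 3 * s) 1)).a₁ = (C93 (3 + 3 * s) 1).a₁ := by rw [hC]
    have h2 : (C • (C91 (3 + 3 * s) 1)).a₂ = (C93 (3 + 3 * s) 1).a₂ := by rw [hC]
    have h3 : (C • (C91 (3 + 3 * s) 1)).a₃ = (C93 (3 + 3 * s) 1).a₃ := by rw [hC]
    have h6 : (C • (C91 (3 + 3 * s) 1)).a₆ = (C93 (3 + 3 * s) 1).a₆ := by rw [hC]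
    simp only [WeierstrassCurve.variableChange_a₁, WeierstrassCurve.variableChange_a₂,
      WeierstrassCurve.variableChange_a₃, WeierstrassCurve.variableChange_a₆, C91, C93] at h1 h2 h3 h6
    have hune : ((C.u⁻¹ : Kˣ) : K) ≠ 0 := Units.ne_zero _
    have hs0 : C.s = 0 := by
      rcases mul_eq_zero.mp h1 with h | h
      · exact absurd h hune
      · linear_combination h / 2
    have hr0 : C.r = 0 := by
      rcases mul_eq_zero.mp h2 with h | h
      · exact absurd (pow_eq_zero_iff (n := 2) (by norm_num) |>.mp h) hune
      · rw [hs0] at h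
        linear_combination h / 3
    have ht0 : C.t = 0 := by
      rcases mul_eq_zero.mp h3 with h | h
      · exact absurd (pow_eq_zero_iff (n := 3) (by norm_num) |>.mp h) hune
      · rw [hr0] at h
        linear_combination h / 2
    rw [hr0, ht0] at h6
    -- h6 : (↑C.u⁻¹)^6 * (big poly) = big poly'
    have h6' : ((C.u⁻¹ : Kˣ) : K) ^ 6 * ((207222624 : K) + 119042784 * s) =
        -729 * ((207222624 : K) + 119042784 * s) := by
      linear_combination h6 + ((-50364663570 - 28410835860*s - 13947137604*s^2 -
        4649045868*s^3 - 774840978*s^4) - ((C.u⁻¹ : Kˣ) : K) ^ 6 * (59508270 + 20549052*s +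
        3892860*s^2 + 236196*s^3 - 1458*s^4)) * hs
    have hBne : (207222624 : K) + 119042784 * s ≠ 0 := by
      intro h
      have h' : ((207222624 : ℚ) : K) + ((119042784 : ℚ) : K) * s = 0 := by
        push_cast; exact h
      have := (lin_indep_sqrt3 hs h').1
      norm_num at this
    have hu6 : ((C.u⁻¹ : Kˣ) : K) ^ 6 = -729 := by
      have hz : (((C.u⁻¹ : Kˣ) : K) ^ 6 + 729) * ((207222624 : K) + 119042784 * s) = 0 := by
        linear_combination h6'
      rcases mul_eq_zero.mp hz with h | h
      · linear_combination h
      · exact absurd h hBne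
    have hv2 : (((C.u⁻¹ : Kˣ) : K) ^ 3) ^ 2 = -729 := by rw [← pow_mul]; exact hu6
    obtain ⟨a, b, hab⟩ := hgen (((C.u⁻¹ : Kˣ) : K) ^ 3)
    rw [hab] at hv2
    have key : ((a ^ 2 + 3 * b ^ 2 + 729 : ℚ) : K) + ((2 * a * b : ℚ) : K) * s = 0 := by
      push_cast
      linear_combination hv2 - (b : K) ^ 2 * hs
    have hp := (lin_indep_sqrt3 hs key).1
    nlinarith [sq_nonneg a, sq_nonneg b]
end
end
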